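/- Suppose 0 = A(T_out − T_sup 𝟙) + M^{-1}(V + W D) and 𝟙^T D = D*, with T_sup scalar. Then D = C_3 T_out + C_4, where C_3 = −W^{-1} M A (I_n − 𝟙 C_1^T) and C_4 = W^{-1} M A 𝟙 C_2 − W^{-1} V, with C_1, C_2 as previously defined. Hence the workload distribution is uniquely determined by T_out and D*. -/

import Mathlib

open Matrix

/-- At steady state with total workload `D*`, the workload distribution
is uniquely determined: `D = C₃ T_out + C₄(D*)`. -/
theorem stmt8 (n : ℕ) (w m : Fin n → ℝ) (cp : ℝ) (A : Matrix (Fin n) (Fin n) ℝ)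
    (V Tout D : Fin n → ℝ) (Tsup Dstar : ℝ)
    (hw : ∀ i, 0 < w i) (hm : ∀ i, 0 < m i) (hcp : 0 < cp)
    (ones : Fin n → ℝ) (hones : ones = fun _ => 1)
    (W M : Matrix (Fin n) (Fin n) ℝ)
    (hW : W = Matrix.diagonal w) (hM : M = Matrix.diagonal (fun i => cp * m i))
    (s : ℝ) (hs : s = Matrix.vecMul ones (W⁻¹ * M * A) ⬝ᵥ ones) (hs0 : s ≠ 0)
    (C1 : Fin n → ℝ) (hC1 : C1 = s⁻¹ • Matrix.vecMul ones (W⁻¹ * M * A))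
    (C2 : ℝ) (hC2 : C2 = (Dstar + ones ⬝ᵥ (W⁻¹).mulVec V) / s)
    (C3 : Matrix (Fin n) (Fin n) ℝ)
    (hC3 : C3 = -(W⁻¹ * M * A) * (1 - Matrix.vecMulVec ones C1))
    (C4 : Fin n → ℝ)
    (hC4 : C4 = C2 • (W⁻¹ * M * A).mulVec ones - (W⁻¹).mulVec V)
    (hsteady : 0 = A.mulVec (Tout - Tsup • ones) + (M⁻¹).mulVec (V + W.mulVec D))
    (hwork : ones ⬝ᵥ D = Dstar) :
    D = C3.mulVec Tout + C4 := by
  have hWdet : IsUnit W.det := by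
    rw [hW, det_diagonal]
    exact isUnit_iff_ne_zero.2 (ne_of_gt (Finset.prod_pos fun i _ => hw i))
  have hMdet : IsUnit M.det := by
    rw [hM, det_diagonal]
    exact isUnit_iff_ne_zero.2 (ne_of_gt (Finset.prod_pos fun i _ => mul_pos hcp (hm i)))
  set B := W⁻¹ * M * A with hB
  -- multiply steady state by M
  have h1 : 0 = (M * A).mulVec (Tout - Tsup • ones) + (V + W.mulVec D) := by
    have h := congrArg M.mulVec hsteady
    rwa [Matrix.mulVec_zero, Matrix.mulVec_add, Matrix.mulVec_mulVec,
      Matrix.mulVec_mulVec, Matrix.mul_nonsing_inv _ hMdet, Matrix.one_mulVec] at h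
  have h2 : W.mulVec D = -((M * A).mulVec (Tout - Tsup • ones)) - V := by
    have := h1.symm
    rw [eq_comm, sub_eq_iff_eq_add, neg_eq_iff_add_eq_zero]
    linear_combination this
  have hD : D = -(B.mulVec Tout) + Tsup • B.mulVec ones - (W⁻¹).mulVec V := by
    have h3 : D = (W⁻¹).mulVec (W.mulVec D) := by
      rw [Matrix.mulVec_mulVec, Matrix.nonsing_inv_mul _ hWdet, Matrix.one_mulVec]
    rw [h3, h2]
    rw [Matrix.mulVec_sub, Matrix.mulVec_neg, Matrix.mulVec_mulVec, Matrix.mulVec_sub,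
      Matrix.mulVec_smul, ← mul_assoc]
    simp [hB, neg_sub]
    abel
  -- compute Tsup
  have ht : Tsup * s = Dstar + (Matrix.vecMul ones B ⬝ᵥ Tout) + ones ⬝ᵥ (W⁻¹).mulVec V := by
    have h4 := hwork
    rw [hD] at h4
    rw [dotProduct_sub, dotProduct_add, dotProduct_neg, dotProduct_smul,
      Matrix.dotProduct_mulVec, Matrix.dotProduct_mulVec, ← hs, smul_eq_mul] at h4
    linarith [h4]
  have hTsup : Tsup = s⁻¹ * (Matrix.vecMul ones B ⬝ᵥ Tout) + C2 := by
    rw [hC2, inv_mul_eq_div, ← add_div, eq_div_iff hs0]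
    linarith [ht]
  -- expand RHS
  have hv : (Matrix.vecMulVec ones C1).mulVec Tout = (C1 ⬝ᵥ Tout) • ones := by
    funext i
    simp [Matrix.mulVec, Matrix.vecMulVec_apply, dotProduct, Finset.mul_sum, mul_assoc,
      mul_comm, mul_left_comm]
  have hC1T : C1 ⬝ᵥ Tout = s⁻¹ * (Matrix.vecMul ones B ⬝ᵥ Tout) := by
    rw [hC1]; simp [smul_dotProduct]
  have hBv : (-B * Matrix.vecMulVec ones C1) *ᵥ Tout = (C1 ⬝ᵥ Tout) • (-(B *ᵥ ones)) := by
    rw [← Matrix.mulVec_mulVec, hv, Matrix.mulVec_smul, Matrix.neg_mulVec]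
  rw [hD, hC3, hC4, Matrix.mul_sub, mul_one, Matrix.sub_mulVec, hBv,
    Matrix.neg_mulVec, hC1T, hTsup, add_smul]
  module
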